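/- The class of languages recognized by one-state Turing machines does not contain all regular languages: the regular language {1} is not recognized by any one-state Turing machine. -/

import Mathlib

inductive Dir : Type
  | L | R
deriving DecidableEq

def Dir.move : Dir → ℤ
  | .L => -1
  | .R => 1

/-- A one-state Turing machine: a blank symbol, a set of halting symbols
(as a Boolean predicate) and a transition function on the tape alphabet. -/
structure OneStateTM (Γ : Type) where
  blank : Γ
  halt : Γ → Bool
  δ : Γ → Γ × Dir

/-- A configuration: a bi-infinite tape and a head position. -/
structure Cfg (Γ : Type) where
  tape : ℤ → Γ
  pos : ℤ

/-- One step of the machine; `none` means the machine has halted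
(the head reads a halting symbol). -/
def OneStateTM.step {Γ : Type} (M : OneStateTM Γ) (c : Cfg Γ) : Option (Cfg Γ) :=
  if M.halt (c.tape c.pos) then none
  else some ⟨Function.update c.tape c.pos (M.δ (c.tape c.pos)).1,
             c.pos + (M.δ (c.tape c.pos)).2.move⟩

/-- Initial tape: the input written in cells 0,…,len−1, blanks elsewhere. -/
def OneStateTM.initTape {Γ : Type} (M : OneStateTM Γ) (l : List Γ) : ℤ → Γ :=
  fun i => if i < 0 then M.blank else l.getD i.toNat M.blank

/-- The machine halts starting from configuration `c`. -/
def OneStateTM.HaltsFrom {Γ : Type} (M : OneStateTM Γ) (c : Cfg Γ) : Prop :=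
  ∃ n : ℕ, (fun o => Option.bind o M.step)^[n] (some c) = none

/-- The machine halts on input `l` (head initially on the leftmost input symbol). -/
def OneStateTM.HaltsOn {Γ : Type} (M : OneStateTM Γ) (l : List Γ) : Prop :=
  M.HaltsFrom ⟨M.initTape l, 0⟩

namespace OneStateTMAux
open OneStateTM
variable {Γ : Type} (M : OneStateTM Γ)

lemma iter_succ (n : ℕ) (o : Option (Cfg Γ)) :
    (fun o => Option.bind o M.step)^[n+1] o =
      (fun o => Option.bind o M.step)^[n] (Option.bind o M.step) :=
  Function.iterate_succ_apply _ n o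

lemma haltsFrom_step {c c' : Cfg Γ} (h : M.step c = some c') :
    M.HaltsFrom c ↔ M.HaltsFrom c' := by
  constructor
  · rintro ⟨n, hn⟩
    match n, hn with
    | 0, hn => simp [OneStateTM.HaltsFrom] at hn
    | n+1, hn =>
      refine ⟨n, ?_⟩
      rw [iter_succ] at hn
      simpa [h] using hn
  · rintro ⟨n, hn⟩
    exact ⟨n+1, by rw [iter_succ]; simpa [h] using hn⟩

lemma noHalt_right (hb : M.halt M.blank = false) (hd : (M.δ M.blank).2 = Dir.R)
    {c : Cfg Γ} (hc : ∀ i, c.pos ≤ i → c.tape i = M.blank) : ¬ M.HaltsFrom c := by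
  rintro ⟨n, hn⟩
  suffices H : ∀ n, ∃ c' : Cfg Γ,
      (fun o => Option.bind o M.step)^[n] (some c) = some c'
      ∧ ∀ i, c'.pos ≤ i → c'.tape i = M.blank by
    obtain ⟨c', hc', _⟩ := H n
    rw [hn] at hc'
    exact Option.some_ne_none _ hc'.symm
  intro n
  induction n with
  | zero => exact ⟨c, rfl, hc⟩
  | succ n ih =>
    obtain ⟨c', hc', hinv⟩ := ih
    have hblank := hinv c'.pos le_rfl
    refine ⟨⟨Function.update c'.tape c'.pos (M.δ M.blank).1, c'.pos + 1⟩, ?_, ?_⟩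
    · rw [Function.iterate_succ_apply', hc']
      simp [OneStateTM.step, hblank, hb, hd, Dir.move]
    · intro i hi
      have hi' : c'.pos + 1 ≤ i := hi
      simp only [Function.update_apply]
      rw [if_neg (by omega)]
      exact hinv i (by omega)

lemma noHalt_left (hb : M.halt M.blank = false) (hd : (M.δ M.blank).2 = Dir.L)
    {c : Cfg Γ} (hc : ∀ i, i ≤ c.pos → c.tape i = M.blank) : ¬ M.HaltsFrom c := by
  rintro ⟨n, hn⟩
  suffices H : ∀ n, ∃ c' : Cfg Γ,
      (fun o => Option.bind o M.step)^[n] (some c) = some c'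
      ∧ ∀ i, i ≤ c'.pos → c'.tape i = M.blank by
    obtain ⟨c', hc', _⟩ := H n
    rw [hn] at hc'
    exact Option.some_ne_none _ hc'.symm
  intro n
  induction n with
  | zero => exact ⟨c, rfl, hc⟩
  | succ n ih =>
    obtain ⟨c', hc', hinv⟩ := ih
    have hblank := hinv c'.pos le_rfl
    refine ⟨⟨Function.update c'.tape c'.pos (M.δ M.blank).1, c'.pos + (-1)⟩, ?_, ?_⟩
    · rw [Function.iterate_succ_apply', hc']
      simp [OneStateTM.step, hblank, hb, hd, Dir.move]
    · intro i hi
      have hi' : i ≤ c'.pos + (-1) := hi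
      simp only [Function.update_apply]
      rw [if_neg (by omega)]
      exact hinv i (by omega)


lemma sim_right (hb : M.halt M.blank = false) (hd : (M.δ M.blank).2 = Dir.R) (q : ℤ) :
    ∀ n (c c' : Cfg Γ), (fun o => Option.bind o M.step)^[n] (some c) = none →
      c.pos < q → (∀ i, q ≤ i → c.tape i = M.blank) →
      (∀ i, i < q → c'.tape i = c.tape i) → c'.pos = c.pos → M.HaltsFrom c' := by
  intro n
  induction n with
  | zero => intro c c' hn; simp at hn
  | succ n ih =>
    intro c c' hn hpos hblank hagree hpos'
    have hread : c'.tape c'.pos = c.tape c.pos := by rw [hpos']; exact hagree _ hpos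
    by_cases hh : M.halt (c.tape c.pos) = true
    · exact ⟨1, by simp [OneStateTM.step, hread, hh]⟩
    · rcases hδ : M.δ (c.tape c.pos) with ⟨v, d⟩
      have hstep : M.step c = some ⟨Function.update c.tape c.pos v, c.pos + d.move⟩ := by
        simp [OneStateTM.step, hh, hδ]
      have hstep' : M.step c' =
          some ⟨Function.update c'.tape c'.pos v, c'.pos + d.move⟩ := by
        simp [OneStateTM.step, hread, hh, hδ]
      have hmm : d.move = 1 ∨ d.move = -1 := by cases d <;> simp [Dir.move]
      have hn2 : (fun o => Option.bind o M.step)^[n]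
          (some ⟨Function.update c.tape c.pos v, c.pos + d.move⟩) = none := by
        rw [iter_succ] at hn
        simpa [hstep] using hn
      by_cases hq : c.pos + d.move < q
      · refine (haltsFrom_step M hstep').mpr ?_
        refine ih _ _ hn2 hq ?_ ?_ (by simp [hpos'])
        · intro i hi
          have hi' : q ≤ i := hi
          show Function.update c.tape c.pos v i = M.blank
          rw [Function.update_apply, if_neg (by omega)]
          exact hblank i hi'
        · intro i hi
          have hi' : i < q := hi
          show Function.update c'.tape c'.pos v i = Function.update c.tape c.pos v i
          rw [Function.update_apply, Function.update_apply, hpos']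
          split
          · rfl
          · exact hagree i hi'
      · exfalso
        have hq' : c.pos + d.move = q := by rcases hmm with h | h <;> omega
        have hno : ¬ M.HaltsFrom ⟨Function.update c.tape c.pos v, c.pos + d.move⟩ := by
          apply noHalt_right M hb hd
          intro i hi
          have hi' : c.pos + d.move ≤ i := hi
          show Function.update c.tape c.pos v i = M.blank
          rw [Function.update_apply, if_neg (by omega)]
          exact hblank i (by omega)
        exact hno ⟨n, hn2⟩

lemma sim_left (hb : M.halt M.blank = false) (hd : (M.δ M.blank).2 = Dir.L) (q : ℤ) :
    ∀ n (c c' : Cfg Γ), (fun o => Option.bind o M.step)^[n] (some c) = none →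
      q < c.pos → (∀ i, i ≤ q → c.tape i = M.blank) →
      (∀ i, q < i → c'.tape i = c.tape i) → c'.pos = c.pos → M.HaltsFrom c' := by
  intro n
  induction n with
  | zero => intro c c' hn; simp at hn
  | succ n ih =>
    intro c c' hn hpos hblank hagree hpos'
    have hread : c'.tape c'.pos = c.tape c.pos := by rw [hpos']; exact hagree _ hpos
    by_cases hh : M.halt (c.tape c.pos) = true
    · exact ⟨1, by simp [OneStateTM.step, hread, hh]⟩
    · rcases hδ : M.δ (c.tape c.pos) with ⟨v, d⟩
      have hstep : M.step c = some ⟨Function.update c.tape c.pos v, c.pos + d.move⟩ := by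
        simp [OneStateTM.step, hh, hδ]
      have hstep' : M.step c' =
          some ⟨Function.update c'.tape c'.pos v, c'.pos + d.move⟩ := by
        simp [OneStateTM.step, hread, hh, hδ]
      have hmm : d.move = 1 ∨ d.move = -1 := by cases d <;> simp [Dir.move]
      have hn2 : (fun o => Option.bind o M.step)^[n]
          (some ⟨Function.update c.tape c.pos v, c.pos + d.move⟩) = none := by
        rw [iter_succ] at hn
        simpa [hstep] using hn
      by_cases hq : q < c.pos + d.move
      · refine (haltsFrom_step M hstep').mpr ?_
        refine ih _ _ hn2 hq ?_ ?_ (by simp [hpos'])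
        · intro i hi
          have hi' : i ≤ q := hi
          show Function.update c.tape c.pos v i = M.blank
          rw [Function.update_apply, if_neg (by omega)]
          exact hblank i hi'
        · intro i hi
          have hi' : q < i := hi
          show Function.update c'.tape c'.pos v i = Function.update c.tape c.pos v i
          rw [Function.update_apply, Function.update_apply, hpos']
          split
          · rfl
          · exact hagree i hi'
      · exfalso
        have hq' : c.pos + d.move = q := by rcases hmm with h | h <;> omega
        have hno : ¬ M.HaltsFrom ⟨Function.update c.tape c.pos v, c.pos + d.move⟩ := by
          apply noHalt_left M hb hd
          intro i hi
          have hi' : i ≤ c.pos + d.move := hi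
          show Function.update c.tape c.pos v i = M.blank
          rw [Function.update_apply, if_neg (by omega)]
          exact hblank i (by omega)
        exact hno ⟨n, hn2⟩

def shiftCfg (s : ℤ) (c : Cfg Γ) : Cfg Γ := ⟨fun i => c.tape (i - s), c.pos + s⟩

lemma step_shift (s : ℤ) (c : Cfg Γ) :
    M.step (shiftCfg s c) = (M.step c).map (shiftCfg s) := by
  by_cases hh : M.halt (c.tape c.pos) = true
  · have : M.halt ((shiftCfg s c).tape (shiftCfg s c).pos) = true := by
      simpa [shiftCfg, add_sub_cancel_right] using hh
    simp [OneStateTM.step, this, hh]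
  · have h2 : M.halt ((shiftCfg s c).tape (shiftCfg s c).pos) = false := by
      simpa [shiftCfg, add_sub_cancel_right] using (Bool.eq_false_iff.mpr hh)
    have h1 : M.halt (c.tape c.pos) = false := Bool.eq_false_iff.mpr hh
    rw [OneStateTM.step, OneStateTM.step, h1, h2]
    simp only [Bool.false_eq_true, if_false, Option.map_some]
    refine congrArg some ?_
    have htape : (shiftCfg s c).tape (shiftCfg s c).pos = c.tape c.pos := by
      simp [shiftCfg, add_sub_cancel_right]
    rw [htape]
    show (⟨_, _⟩ : Cfg Γ) = shiftCfg s ⟨_, _⟩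
    unfold shiftCfg
    refine congrArg₂ Cfg.mk ?_ (by push_cast; ring)
    funext i
    show Function.update (fun j => c.tape (j - s)) (c.pos + s) _ i
        = Function.update c.tape c.pos _ (i - s)
    rw [Function.update_apply, Function.update_apply]
    by_cases h : i = c.pos + s
    · rw [if_pos h, if_pos (by omega)]
    · rw [if_neg h, if_neg (by omega)]

lemma haltsFrom_shift (s : ℤ) {c : Cfg Γ} (h : M.HaltsFrom c) :
    M.HaltsFrom (shiftCfg s c) := by
  suffices H : ∀ n, (fun o => Option.bind o M.step)^[n] (some (shiftCfg s c))
      = Option.map (shiftCfg s) ((fun o => Option.bind o M.step)^[n] (some c)) by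
    obtain ⟨n, hn⟩ := h
    exact ⟨n, by rw [H n, hn]; rfl⟩
  intro n
  induction n with
  | zero => rfl
  | succ n ih =>
    rw [Function.iterate_succ_apply', Function.iterate_succ_apply', ih]
    rcases hcn : (fun o => Option.bind o M.step)^[n] (some c) with _ | c₀
    · rfl
    · show M.step (shiftCfg s c₀) = Option.map (shiftCfg s) (M.step c₀)
      exact step_shift M s c₀


lemma initTape_one_eq (one : Γ) (i : ℤ) :
    M.initTape [one] i = if i = 0 then one else M.blank := by
  unfold OneStateTM.initTape
  rcases lt_trichotomy i 0 with h | h | h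
  · rw [if_pos h, if_neg (by omega)]
  · subst h; simp
  · rw [if_neg (by omega), if_neg (by omega)]
    apply List.getD_eq_default
    simp; omega

lemma initTape_two_eq (one : Γ) (i : ℤ) :
    M.initTape [one, one] i = if i = 0 ∨ i = 1 then one else M.blank := by
  unfold OneStateTM.initTape
  rcases lt_trichotomy i 0 with h | h | h
  · rw [if_pos h, if_neg (by omega)]
  · subst h; simp
  · rw [if_neg (by omega)]
    by_cases h1 : i = 1
    · subst h1; simp
    · rw [if_neg (by omega)]
      apply List.getD_eq_default
      simp; omega

end OneStateTMAux

open OneStateTMAux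

/-- the regular language {1} is not recognized (by halting) by any
one-state Turing machine. -/
theorem no_oneState_recognizes_singleton_one :
    ¬ ∃ (Γ : Type) (M : OneStateTM Γ) (one : Γ), one ≠ M.blank ∧
        ∀ k : ℕ, (M.HaltsOn (List.replicate k one) ↔ k = 1) := by
  rintro ⟨Γ, M, one, hone, h⟩
  have hrep1 : List.replicate 1 one = [one] := by simp
  have hrep2 : List.replicate 2 one = [one, one] := by
    simp [List.replicate]
  have hT1 := initTape_one_eq M one
  have hT2 := initTape_two_eq M one
  have hread1 : M.initTape [one] 0 = one := by rw [hT1]; simp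
  have hread2 : M.initTape [one, one] 0 = one := by rw [hT2]; simp
  -- blank is not halting
  have hb : M.halt M.blank = false := by
    by_contra hb
    have hb' : M.halt M.blank = true := by simpa using hb
    have : M.HaltsOn (List.replicate 0 one) := by
      rw [OneStateTM.HaltsOn, List.replicate_zero]
      refine ⟨1, ?_⟩
      have h0 : M.initTape [] 0 = M.blank := by simp [OneStateTM.initTape]
      simp [OneStateTM.step, h0, hb']
    simpa using (h 0).mp this
  -- one is not halting
  have ho : M.halt one = false := by
    by_contra ho
    have ho' : M.halt one = true := by simpa using ho
    have : M.HaltsOn (List.replicate 2 one) := by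
      rw [OneStateTM.HaltsOn, hrep2]
      exact ⟨1, by simp [OneStateTM.step, hread2, ho']⟩
    simpa using (h 2).mp this
  have h1 : M.HaltsFrom ⟨M.initTape [one], 0⟩ := by
    have := (h 1).mpr rfl
    rwa [OneStateTM.HaltsOn, hrep1] at this
  have h2 : ¬ M.HaltsFrom ⟨M.initTape [one, one], 0⟩ := by
    intro hh
    have : M.HaltsOn (List.replicate 2 one) := by
      rwa [OneStateTM.HaltsOn, hrep2]
    simpa using (h 2).mp this
  rcases hδo : M.δ one with ⟨a, d1⟩
  rcases hδb : M.δ M.blank with ⟨b, d2⟩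
  -- first steps on input [one]
  have hstep1 : M.step ⟨M.initTape [one], 0⟩ =
      some ⟨Function.update (M.initTape [one]) 0 a, 0 + d1.move⟩ := by
    simp [OneStateTM.step, hread1, ho, hδo]
  have hstep2 : M.step ⟨M.initTape [one, one], 0⟩ =
      some ⟨Function.update (M.initTape [one, one]) 0 a, 0 + d1.move⟩ := by
    simp [OneStateTM.step, hread2, ho, hδo]
  cases d1 <;> cases d2
  case L.L =>
    -- head moves left into blanks, blank pushes left: input 1 never halts
    have hc1 : M.HaltsFrom ⟨Function.update (M.initTape [one]) 0 a, 0 + Dir.L.move⟩ :=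
      (haltsFrom_step M hstep1).mp h1
    refine noHalt_left M hb (by rw [hδb]) ?_ hc1
    intro i hi
    have hi' : i ≤ 0 + Dir.L.move := hi
    have hmv : Dir.L.move = -1 := rfl
    show Function.update (M.initTape [one]) 0 a i = M.blank
    rw [Function.update_apply, if_neg (by omega), hT1, if_neg (by omega)]
  case L.R =>
    -- after two steps on input 1 and on input 2, configs agree except cell 1
    have hc1 : M.HaltsFrom ⟨Function.update (M.initTape [one]) 0 a, 0 + Dir.L.move⟩ :=
      (haltsFrom_step M hstep1).mp h1
    have hrdb : (Function.update (M.initTape [one]) 0 a) (0 + Dir.L.move) = M.blank := by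
      rw [Function.update_apply, if_neg (by decide), hT1, if_neg (by decide)]
    have hstep1b : M.step ⟨Function.update (M.initTape [one]) 0 a, 0 + Dir.L.move⟩ =
        some ⟨Function.update (Function.update (M.initTape [one]) 0 a) (0 + Dir.L.move) b,
              0 + Dir.L.move + Dir.R.move⟩ := by
      simp only [zero_add] at hrdb ⊢
      simp [OneStateTM.step, hrdb, hb, hδb]
    have hc2 : M.HaltsFrom ⟨Function.update (Function.update (M.initTape [one]) 0 a)
        (0 + Dir.L.move) b, 0 + Dir.L.move + Dir.R.move⟩ :=
      (haltsFrom_step M hstep1b).mp hc1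
    obtain ⟨n, hn⟩ := hc2
    -- input 2 side: same two steps
    have hrdb2 : (Function.update (M.initTape [one, one]) 0 a) (0 + Dir.L.move) = M.blank := by
      rw [Function.update_apply, if_neg (by decide), hT2, if_neg (by decide)]
    have hstep2b : M.step ⟨Function.update (M.initTape [one, one]) 0 a, 0 + Dir.L.move⟩ =
        some ⟨Function.update (Function.update (M.initTape [one, one]) 0 a)
          (0 + Dir.L.move) b, 0 + Dir.L.move + Dir.R.move⟩ := by
      simp only [zero_add] at hrdb2 ⊢
      simp [OneStateTM.step, hrdb2, hb, hδb]
    apply h2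
    refine (haltsFrom_step M hstep2).mpr ?_
    refine (haltsFrom_step M hstep2b).mpr ?_
    refine sim_right M hb (by rw [hδb]) 1 n _ _ hn ?_ ?_ ?_ ?_
    · show (0:ℤ) + Dir.L.move + Dir.R.move < 1
      decide
    · intro i hi
      show Function.update (Function.update (M.initTape [one]) 0 a) (0 + Dir.L.move) b i
          = M.blank
      have : (0 : ℤ) + Dir.L.move = -1 := by decide
      rw [Function.update_apply, Function.update_apply, this,
        if_neg (by omega), if_neg (by omega), hT1, if_neg (by omega)]
    · intro i hi
      show Function.update (Function.update (M.initTape [one, one]) 0 a) (0 + Dir.L.move) b i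
          = Function.update (Function.update (M.initTape [one]) 0 a) (0 + Dir.L.move) b i
      have : (0 : ℤ) + Dir.L.move = -1 := by decide
      rw [this]
      rcases eq_or_ne i (-1) with rfl | h1
      · simp [Function.update_apply]
      · rcases eq_or_ne i 0 with rfl | h0
        · simp [Function.update_apply]
        · rw [Function.update_apply, Function.update_apply, Function.update_apply,
            Function.update_apply, if_neg h1, if_neg h1, if_neg h0, if_neg h0,
            hT1, hT2, if_neg h0, if_neg (by omega)]
    · rfl
  case R.R =>
    have hc1 : M.HaltsFrom ⟨Function.update (M.initTape [one]) 0 a, 0 + Dir.R.move⟩ :=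
      (haltsFrom_step M hstep1).mp h1
    refine noHalt_right M hb (by rw [hδb]) ?_ hc1
    intro i hi
    have hi' : 0 + Dir.R.move ≤ i := hi
    have hmv : Dir.R.move = 1 := rfl
    show Function.update (M.initTape [one]) 0 a i = M.blank
    rw [Function.update_apply, if_neg (by omega), hT1, if_neg (by omega)]
  case R.L =>
    have hc1 : M.HaltsFrom ⟨Function.update (M.initTape [one]) 0 a, 0 + Dir.R.move⟩ :=
      (haltsFrom_step M hstep1).mp h1
    have hrdb : (Function.update (M.initTape [one]) 0 a) (0 + Dir.R.move) = M.blank := by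
      rw [Function.update_apply, if_neg (by decide), hT1, if_neg (by decide)]
    have hstep1b : M.step ⟨Function.update (M.initTape [one]) 0 a, 0 + Dir.R.move⟩ =
        some ⟨Function.update (Function.update (M.initTape [one]) 0 a) (0 + Dir.R.move) b,
              0 + Dir.R.move + Dir.L.move⟩ := by
      simp only [zero_add] at hrdb ⊢
      simp [OneStateTM.step, hrdb, hb, hδb]
    have hc2 : M.HaltsFrom ⟨Function.update (Function.update (M.initTape [one]) 0 a)
        (0 + Dir.R.move) b, 0 + Dir.R.move + Dir.L.move⟩ :=
      (haltsFrom_step M hstep1b).mp hc1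
    -- shift by 1
    have hc2s := haltsFrom_shift M 1 hc2
    obtain ⟨n, hn⟩ := hc2s
    -- input 2 side: three steps
    have hrd2b : (Function.update (M.initTape [one, one]) 0 a) (0 + Dir.R.move) = one := by
      have e : (0:ℤ) + Dir.R.move = 1 := rfl
      rw [e, Function.update_apply, if_neg (by norm_num), hT2, if_pos (Or.inr rfl)]
    have hstep2b : M.step ⟨Function.update (M.initTape [one, one]) 0 a, 0 + Dir.R.move⟩ =
        some ⟨Function.update (Function.update (M.initTape [one, one]) 0 a)
          (0 + Dir.R.move) a, 0 + Dir.R.move + Dir.R.move⟩ := by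
      simp only [zero_add] at hrd2b ⊢
      simp [OneStateTM.step, hrd2b, ho, hδo]
    have hrd2c : (Function.update (Function.update (M.initTape [one, one]) 0 a)
        (0 + Dir.R.move) a) (0 + Dir.R.move + Dir.R.move) = M.blank := by
      rw [Function.update_apply, if_neg (by decide), Function.update_apply,
        if_neg (by decide), hT2, if_neg (by decide)]
    have hstep2c : M.step ⟨Function.update (Function.update (M.initTape [one, one]) 0 a)
        (0 + Dir.R.move) a, 0 + Dir.R.move + Dir.R.move⟩ =
        some ⟨Function.update (Function.update (Function.update (M.initTape [one, one]) 0 a)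
          (0 + Dir.R.move) a) (0 + Dir.R.move + Dir.R.move) b,
          0 + Dir.R.move + Dir.R.move + Dir.L.move⟩ := by
      simp only [zero_add] at hrd2c ⊢
      simp [OneStateTM.step, hrd2c, hb, hδb]
    apply h2
    refine (haltsFrom_step M hstep2).mpr ?_
    refine (haltsFrom_step M hstep2b).mpr ?_
    refine (haltsFrom_step M hstep2c).mpr ?_
    refine sim_left M hb (by rw [hδb]) 0 n _ _ hn ?_ ?_ ?_ ?_
    · show (0:ℤ) < 0 + Dir.R.move + Dir.L.move + 1
      decide
    · -- shifted config blank on i ≤ 0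
      intro i hi
      have hi' : i ≤ (0 : ℤ) := hi
      show (Function.update (Function.update (M.initTape [one]) 0 a)
        (0 + Dir.R.move) b) (i - 1) = M.blank
      have : (0 : ℤ) + Dir.R.move = 1 := by decide
      rw [this, Function.update_apply, Function.update_apply,
        if_neg (by omega), if_neg (by omega), hT1, if_neg (by omega)]
    · -- agreement on i > 0
      intro i hi
      have hi' : (0 : ℤ) < i := hi
      show Function.update (Function.update (Function.update (M.initTape [one, one]) 0 a)
          (0 + Dir.R.move) a) (0 + Dir.R.move + Dir.R.move) b i
        = (Function.update (Function.update (M.initTape [one]) 0 a)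
          (0 + Dir.R.move) b) (i - 1)
      have e1 : (0 : ℤ) + Dir.R.move = 1 := by decide
      have e2 : (0 : ℤ) + Dir.R.move + Dir.R.move = 2 := by decide
      rw [e2, e1]
      rcases eq_or_ne i 1 with rfl | h1
      · norm_num [Function.update_apply]
      · rcases eq_or_ne i 2 with rfl | hi2
        · norm_num [Function.update_apply]
        · rw [Function.update_apply, Function.update_apply, Function.update_apply,
            Function.update_apply, Function.update_apply,
            if_neg hi2, if_neg h1, if_neg (by omega), if_neg (by omega),
            if_neg (by omega), hT1, hT2, if_neg (by omega), if_neg (by omega)]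
    · show (0:ℤ) + Dir.R.move + Dir.R.move + Dir.L.move = 0 + Dir.R.move + Dir.L.move + 1
      decide
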